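/- arXiv:2508.05297 — 2 statements merged into one kernel-verified Lean document; each statement's English description precedes it below -/
import Mathlib

section
/- Let (Ω, F, P) be a probability space with filtration (F_t)_{t≥0}, let f : ℝ^d → ℝ be differentiable, L-smooth (L > 0), and bounded below by f* ∈ ℝ. Let T ≥ 1, σ ≥ 0, let b_t ≥ 1 be batch sizes and let learning rates satisfy η_t ∈ [η_min, η_max] ⊆ [0, 2/L) with Σ_{t=0}^{T−1} η_t ≠ 0. Let θ_0 ∈ ℝ^d be deterministic and let (θ_t) and (g_t) be ℝ^d-valued processes with θ_t F_t-measurable, g_t square-integrable, satisfying almost surely E[g_t | F_t] = ∇f(θ_t), E[‖g_t − ∇f(θ_t)‖² | F_t] ≤ σ²/b_t, and θ_{t+1} = θ_t − η_t g_t. Then min_{0 ≤ t ≤ T−1} E[‖∇f(θ_t)‖²] ≤ (2(f(θ_0) − f*)/(2 − L η_max)) · (1/Σ_{t=0}^{T−1} η_t) + (L σ²/(2 − L η_max)) · (Σ_{t=0}^{T−1} η_t²/b_t)/(Σ_{t=0}^{T−1} η_t). -/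
open MeasureTheory InnerProductSpace
open scoped BigOperators RealInnerProductSpace

/-- Descent lemma: for a differentiable function with `L`-Lipschitz gradient,
`f (x + v) ≤ f x + ⟪∇f x, v⟫ + L/2 ‖v‖²`. -/
theorem sgd_descent_lemma {E : Type*} [NormedAddCommGroup E] [InnerProductSpace ℝ E]
    [CompleteSpace E]
    (f : E → ℝ) (hdiff : Differentiable ℝ f) (L : ℝ)
    (hlip : ∀ x y, ‖gradient f x - gradient f y‖ ≤ L * ‖x - y‖) (x v : E) :
    f (x + v) ≤ f x + ⟪gradient f x, v⟫ + L / 2 * ‖v‖ ^ 2 := by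
  have hφ : ∀ t : ℝ, HasDerivAt (fun s : ℝ => f (x + s • v))
      ⟪gradient f (x + t • v), v⟫ t := by
    intro t
    have h1 : HasDerivAt (fun s : ℝ => x + s • v) v t := by
      simpa using ((hasDerivAt_id t).smul_const v).const_add x
    have h2 : HasFDerivAt f (toDual ℝ E (gradient f (x + t • v))) (x + t • v) :=
      (hdiff (x + t • v)).hasGradientAt
    simpa [toDual_apply_apply, Function.comp_def] using (h2.comp_hasDerivAt t h1)
  set ψ : ℝ → ℝ := fun t =>
    f x + t * ⟪gradient f x, v⟫ + L / 2 * ‖v‖ ^ 2 * t ^ 2 - f (x + t • v) with hψdef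
  have hψ : ∀ t : ℝ, HasDerivAt ψ
      (⟪gradient f x, v⟫ + L / 2 * ‖v‖ ^ 2 * (2 * t) - ⟪gradient f (x + t • v), v⟫) t := by
    intro t
    have h1 : HasDerivAt (fun t : ℝ => f x + t * ⟪gradient f x, v⟫ + L / 2 * ‖v‖ ^ 2 * t ^ 2)
        (⟪gradient f x, v⟫ + L / 2 * ‖v‖ ^ 2 * (2 * t)) t := by
      have := (((hasDerivAt_id t).mul_const ⟪gradient f x, v⟫).const_add (f x)).add
        (((hasDerivAt_pow 2 t)).const_mul (L / 2 * ‖v‖ ^ 2))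
      simpa [Pi.add_def, pow_one, mul_comm, mul_assoc, mul_left_comm] using this
    rw [hψdef]
    simpa [Pi.sub_def] using h1.sub (hφ t)
  have hmono : MonotoneOn ψ (Set.Icc (0:ℝ) 1) := by
    refine monotoneOn_of_deriv_nonneg (convex_Icc 0 1)
      (fun t _ => ((hψ t).continuousAt.continuousWithinAt)) ?_ ?_
    · intro t ht
      exact ((hψ t).differentiableAt).differentiableWithinAt
    · intro t ht
      rw [interior_Icc] at ht
      rw [(hψ t).deriv]
      have hcs : ⟪gradient f (x + t • v) - gradient f x, v⟫ ≤ L * t * ‖v‖ ^ 2 := by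
        calc ⟪gradient f (x + t • v) - gradient f x, v⟫
            ≤ ‖gradient f (x + t • v) - gradient f x‖ * ‖v‖ := real_inner_le_norm _ _
          _ ≤ (L * ‖(x + t • v) - x‖) * ‖v‖ := by
              gcongr; exact hlip _ _
          _ = L * (|t| * ‖v‖) * ‖v‖ := by
              simp [norm_smul, Real.norm_eq_abs]
          _ = L * t * ‖v‖ ^ 2 := by
              rw [abs_of_pos ht.1]; ring
      have hexp : ⟪gradient f (x + t • v), v⟫ - ⟪gradient f x, v⟫
          = ⟪gradient f (x + t • v) - gradient f x, v⟫ := by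
        rw [inner_sub_left]
      nlinarith [hcs]
  have h01 : ψ 0 ≤ ψ 1 := hmono (by simp) (by simp) zero_le_one
  simp only [hψdef] at h01
  simp only [zero_smul, one_smul, add_zero, zero_mul, mul_zero, zero_pow, one_pow, mul_one,
    one_mul] at h01
  linarith

/-- Conditional expectation commutes with continuous linear maps. -/
theorem sgd_condexp_clm_comm {Ω : Type*} {m : MeasurableSpace Ω} [m0 : MeasurableSpace Ω]
    {μ : Measure Ω} [IsFiniteMeasure μ] (hm : m ≤ m0)
    {E F : Type*} [NormedAddCommGroup E] [NormedSpace ℝ E] [CompleteSpace E]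
    [NormedAddCommGroup F] [NormedSpace ℝ F] [CompleteSpace F]
    (T : E →L[ℝ] F) {f : Ω → E} (hf : Integrable f μ) :
    μ[fun ω => T (f ω)|m] =ᵐ[μ] fun ω => T ((μ[f|m]) ω) := by
  have h1 : Integrable (fun ω => T (f ω)) μ := T.integrable_comp hf
  have h2 : Integrable (fun ω => T ((μ[f|m]) ω)) μ := T.integrable_comp integrable_condExp
  refine (ae_eq_condExp_of_forall_setIntegral_eq hm h1
    (fun s _ _ => h2.integrableOn)
    (fun s hs hμs => ?_)
    (T.continuous.comp_stronglyMeasurable stronglyMeasurable_condExp).aestronglyMeasurable).symm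
  calc ∫ ω in s, T ((μ[f|m]) ω) ∂μ = T (∫ ω in s, (μ[f|m]) ω ∂μ) :=
        (T.integral_comp_comm integrable_condExp.integrableOn)
    _ = T (∫ ω in s, f ω ∂μ) := by rw [setIntegral_condExp hm hf hs]
    _ = ∫ ω in s, T (f ω) ∂μ := (T.integral_comp_comm hf.integrableOn).symm

/-- The pointwise inner product of two `L²` functions is integrable. -/
theorem sgd_integrable_inner {Ω : Type*} [MeasurableSpace Ω] {μ : Measure Ω}
    {E : Type*} [NormedAddCommGroup E] [InnerProductSpace ℝ E]
    {f g : Ω → E} (hf : MemLp f 2 μ) (hg : MemLp g 2 μ) :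
    Integrable (fun ω => ⟪f ω, g ω⟫) μ := by
  have h := L2.integrable_inner (𝕜 := ℝ) (hf.toLp f) (hg.toLp g)
  refine h.congr ?_
  filter_upwards [hf.coeFn_toLp, hg.coeFn_toLp] with ω h1 h2
  rw [h1, h2]

/-- The product of two real `L²` functions is integrable. -/
theorem sgd_integrable_mul {Ω : Type*} [MeasurableSpace Ω] {μ : Measure Ω}
    {f g : Ω → ℝ} (hf : MemLp f 2 μ) (hg : MemLp g 2 μ) :
    Integrable (fun ω => f ω * g ω) μ := by
  have := sgd_integrable_inner hf hg
  simpa [RCLike.inner_apply, mul_comm] using this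



/-- Convergence bound for mini-batch SGD (Lemma 1): if `f` is differentiable, `L`-smooth and
bounded below by `f*`, the iterates satisfy `θ_{t+1} = θ_t − η_t g_t` with conditionally
unbiased stochastic gradients of conditional variance at most `σ²/b_t`, and the learning
rates lie in `[η_min, η_max] ⊆ [0, 2/L)`, then
`min_{t<T} E[‖∇f(θ_t)‖²]` is bounded by the stated quantity. -/
theorem minibatch_sgd_convergence
    {Ω : Type*} [m0 : MeasurableSpace Ω] (P : Measure Ω) [IsProbabilityMeasure P]
    (ℱ : Filtration ℕ m0)
    (d : ℕ) (f : EuclideanSpace ℝ (Fin d) → ℝ) (L : ℝ) (hL : 0 < L)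
    (hdiff : Differentiable ℝ f)
    (hsmooth : ∀ θ₁ θ₂ : EuclideanSpace ℝ (Fin d),
      ‖gradient f θ₁ - gradient f θ₂‖ ≤ L * ‖θ₁ - θ₂‖)
    (fstar : ℝ) (hbound : ∀ θ', fstar ≤ f θ')
    (T : ℕ) (hT : 1 ≤ T) (σ : ℝ) (hσ : 0 ≤ σ)
    (b : ℕ → ℝ) (hb : ∀ t, 1 ≤ b t)
    (η : ℕ → ℝ) (ηmin ηmax : ℝ) (hηmin : 0 ≤ ηmin) (hηmax : ηmax < 2 / L)
    (hη : ∀ t, η t ∈ Set.Icc ηmin ηmax)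
    (hηsum : ∑ t ∈ Finset.range T, η t ≠ 0)
    (θ₀ : EuclideanSpace ℝ (Fin d))
    (θ g : ℕ → Ω → EuclideanSpace ℝ (Fin d))
    (hθ₀ : θ 0 = fun _ => θ₀)
    (hθmeas : ∀ t, StronglyMeasurable[ℱ t] (θ t))
    (hgL2 : ∀ t, MemLp (g t) 2 P)
    (hunbiased : ∀ t, P[g t | ℱ t] =ᵐ[P] fun ω => gradient f (θ t ω))
    (hvar : ∀ t,
      ∀ᵐ ω ∂P, (P[fun ω' => ‖g t ω' - gradient f (θ t ω')‖ ^ 2 | ℱ t]) ω ≤ σ ^ 2 / b t)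
    (hupdate : ∀ t, ∀ᵐ ω ∂P, θ (t + 1) ω = θ t ω - η t • g t ω) :
    (Finset.range T).inf' (Finset.nonempty_range_iff.mpr (by omega))
        (fun t => ∫ ω, ‖gradient f (θ t ω)‖ ^ 2 ∂P)
      ≤ (2 * (f θ₀ - fstar) / (2 - L * ηmax)) * (1 / ∑ t ∈ Finset.range T, η t)
        + (L * σ ^ 2 / (2 - L * ηmax))
          * ((∑ t ∈ Finset.range T, η t ^ 2 / b t) / (∑ t ∈ Finset.range T, η t)) := by
  classical
  set X : ℕ → Ω → EuclideanSpace ℝ (Fin d) := fun t ω => gradient f (θ t ω) with hXdef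
  have hle : ∀ t, ℱ t ≤ m0 := ℱ.le
  have hηt0 : ∀ t, 0 ≤ η t := fun t => hηmin.trans (hη t).1
  have hηtmax : ∀ t, η t ≤ ηmax := fun t => (hη t).2
  have hκ : 0 < 2 - L * ηmax := by
    rw [lt_div_iff₀ hL] at hηmax; linarith
  have hbt : ∀ t, (0:ℝ) < b t := fun t => lt_of_lt_of_le one_pos (hb t)
  -- continuity of the gradient
  have hgradcont : Continuous (gradient f) := by
    have : LipschitzWith L.toNNReal (gradient f) := by
      apply LipschitzWith.of_dist_le_mul
      intro x y
      simpa [dist_eq_norm, Real.coe_toNNReal _ hL.le] using hsmooth x y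
    exact this.continuous
  -- θ t is L²
  have hθL2 : ∀ t, MemLp (θ t) 2 P := by
    intro t
    induction t with
    | zero => rw [hθ₀]; exact memLp_const θ₀
    | succ n ih =>
        refine MemLp.ae_eq ?_ (ih.sub ((hgL2 n).const_smul (η n)))
        filter_upwards [hupdate n] with ω h
        exact h.symm
  have hθsm : ∀ t, AEStronglyMeasurable (θ t) P :=
    fun t => ((hθmeas t).mono (hle t)).aestronglyMeasurable
  -- X t is ℱ t strongly measurable and L²
  have hXsm : ∀ t, StronglyMeasurable[ℱ t] (X t) :=
    fun t => hgradcont.comp_stronglyMeasurable (hθmeas t)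
  have hXsm0 : ∀ t, AEStronglyMeasurable (X t) P :=
    fun t => ((hXsm t).mono (hle t)).aestronglyMeasurable
  have hgradnorm : ∀ x, ‖gradient f x‖ ≤ ‖gradient f θ₀‖ + L * ‖x - θ₀‖ := by
    intro x
    have h1 := hsmooth x θ₀
    have h2 : ‖gradient f x‖ ≤ ‖gradient f θ₀‖ + ‖gradient f x - gradient f θ₀‖ :=
      norm_le_insert' _ _
    linarith
  have hXL2 : ∀ t, MemLp (X t) 2 P := by
    intro t
    have hB : MemLp (fun ω => ‖gradient f θ₀‖ + L * ‖θ t ω - θ₀‖) 2 P :=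
      (memLp_const (‖gradient f θ₀‖ : ℝ)).add ((((hθL2 t).sub (memLp_const θ₀)).norm).const_mul L)
    refine MemLp.of_le hB (hXsm0 t) ?_
    refine Filter.Eventually.of_forall fun ω => ?_
    have h0 : (0:ℝ) ≤ ‖gradient f θ₀‖ + L * ‖θ t ω - θ₀‖ :=
      add_nonneg (norm_nonneg _) (mul_nonneg hL.le (norm_nonneg _))
    rw [Real.norm_eq_abs, abs_of_nonneg h0]
    exact hgradnorm _
  -- f (θ t) is integrable
  have hfInt : ∀ t, Integrable (fun ω => f (θ t ω)) P := by
    intro t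
    have hΔ : MemLp (fun ω => θ t ω - θ₀) 2 P := (hθL2 t).sub (memLp_const θ₀)
    have h1 : Integrable (fun ω => ‖gradient f θ₀‖ * ‖θ t ω - θ₀‖) P :=
      (hΔ.norm.integrable one_le_two).const_mul ‖gradient f θ₀‖
    have h2 : Integrable (fun ω => L / 2 * ‖θ t ω - θ₀‖ ^ 2) P :=
      (hΔ.norm.integrable_sq).const_mul (L / 2)
    have hB : Integrable (fun ω =>
        |fstar| + |f θ₀| + ‖gradient f θ₀‖ * ‖θ t ω - θ₀‖ + L / 2 * ‖θ t ω - θ₀‖ ^ 2) P := by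
      have := ((integrable_const (|fstar| + |f θ₀|)).add h1).add h2
      refine this.congr (Filter.Eventually.of_forall fun ω => ?_)
      simp only [Pi.add_apply]
    refine Integrable.mono' hB (hdiff.continuous.comp_aestronglyMeasurable (hθsm t)) ?_
    refine Filter.Eventually.of_forall fun ω => ?_
    rw [Real.norm_eq_abs, abs_le]
    constructor
    · have h1 := hbound (θ t ω)
      have h2 : (0:ℝ) ≤ ‖gradient f θ₀‖ * ‖θ t ω - θ₀‖ :=
        mul_nonneg (norm_nonneg _) (norm_nonneg _)
      have h3 : (0:ℝ) ≤ L / 2 * ‖θ t ω - θ₀‖ ^ 2 := by positivity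
      have h4 : -|fstar| ≤ fstar := neg_abs_le _
      have h5 : (0:ℝ) ≤ |f θ₀| := abs_nonneg _
      linarith
    · have h1 := sgd_descent_lemma f hdiff L hsmooth θ₀ (θ t ω - θ₀)
      rw [add_sub_cancel] at h1
      have h2 : ⟪gradient f θ₀, θ t ω - θ₀⟫ ≤ ‖gradient f θ₀‖ * ‖θ t ω - θ₀‖ :=
        real_inner_le_norm _ _
      have h4 : f θ₀ ≤ |f θ₀| := le_abs_self _
      have h5 : (0:ℝ) ≤ |fstar| := abs_nonneg _
      linarith
  -- abbreviations
  set A : ℕ → ℝ := fun t => ∫ ω, ‖gradient f (θ t ω)‖ ^ 2 ∂P with hAdef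
  set Ff : ℕ → ℝ := fun t => ∫ ω, f (θ t ω) ∂P with hFdef
  have hA0 : ∀ t, 0 ≤ A t := fun t => integral_nonneg fun ω => by positivity
  have hXnormsqInt : ∀ t, Integrable (fun ω => ‖X t ω‖ ^ 2) P :=
    fun t => (hXL2 t).norm.integrable_sq
  have hgnormsqInt : ∀ t, Integrable (fun ω => ‖g t ω‖ ^ 2) P :=
    fun t => (hgL2 t).norm.integrable_sq
  have hXgInt : ∀ t, Integrable (fun ω => ⟪X t ω, g t ω⟫) P :=
    fun t => sgd_integrable_inner (hXL2 t) (hgL2 t)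
  -- key identity: E⟪X, g⟫ = E‖X‖²
  have hprodInt : ∀ t (i : Fin d), Integrable (fun ω => X t ω i * g t ω i) P := by
    intro t i
    have hXi2 : MemLp (fun ω => X t ω i) 2 P := by
      simpa [Function.comp_def] using (EuclideanSpace.proj (𝕜 := ℝ) i).comp_memLp' (hXL2 t)
    have hgi2 : MemLp (fun ω => g t ω i) 2 P := by
      simpa [Function.comp_def] using (EuclideanSpace.proj (𝕜 := ℝ) i).comp_memLp' (hgL2 t)
    exact sgd_integrable_mul hXi2 hgi2
  have hsqInt : ∀ t (i : Fin d), Integrable (fun ω => X t ω i * X t ω i) P := by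
    intro t i
    have hXi2 : MemLp (fun ω => X t ω i) 2 P := by
      simpa [Function.comp_def] using (EuclideanSpace.proj (𝕜 := ℝ) i).comp_memLp' (hXL2 t)
    exact sgd_integrable_mul hXi2 hXi2
  have hI1 : ∀ t, ∫ ω, ⟪X t ω, g t ω⟫ ∂P = A t := by
    intro t
    have hgInt : Integrable (g t) P := (hgL2 t).integrable one_le_two
    have hmain : ∀ i : Fin d, ∫ ω, X t ω i * g t ω i ∂P = ∫ ω, X t ω i * X t ω i ∂P := by
      intro i
      have hgi2 : MemLp (fun ω => g t ω i) 2 P := by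
        simpa [Function.comp_def] using (EuclideanSpace.proj (𝕜 := ℝ) i).comp_memLp' (hgL2 t)
      have hgiInt : Integrable (fun ω => g t ω i) P := hgi2.integrable one_le_two
      have hXi_sm : StronglyMeasurable[ℱ t] (fun ω => X t ω i) :=
        (EuclideanSpace.proj (𝕜 := ℝ) i).continuous.comp_stronglyMeasurable (hXsm t)
      have hcondi : P[(fun ω => g t ω i)|ℱ t] =ᵐ[P] fun ω => X t ω i := by
        have h1 := sgd_condexp_clm_comm (hle t) (EuclideanSpace.proj (𝕜 := ℝ) i) hgInt
        have h2 : (fun ω => (EuclideanSpace.proj (𝕜 := ℝ) i) ((P[g t|ℱ t]) ω))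
            =ᵐ[P] fun ω => X t ω i := by
          filter_upwards [hunbiased t] with ω h
          rw [h]
          rfl
        exact h1.trans h2
      have hmul := condExp_mul_of_stronglyMeasurable_left hXi_sm (hprodInt t i) hgiInt
      calc ∫ ω, X t ω i * g t ω i ∂P
          = ∫ ω, (P[(fun ω => X t ω i) * (fun ω => g t ω i)|ℱ t]) ω ∂P :=
            (integral_condExp (hle t)).symm
        _ = ∫ ω, X t ω i * (P[(fun ω => g t ω i)|ℱ t]) ω ∂P := by
            refine integral_congr_ae (hmul.mono fun ω h => ?_)
            simpa using h
        _ = ∫ ω, X t ω i * X t ω i ∂P := by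
            refine integral_congr_ae (hcondi.mono fun ω h => ?_)
            dsimp only
            rw [h]
    calc ∫ ω, ⟪X t ω, g t ω⟫ ∂P
        = ∫ ω, ∑ i, X t ω i * g t ω i ∂P := by
          refine integral_congr_ae (Filter.Eventually.of_forall fun ω => ?_)
          simp [PiLp.inner_apply, RCLike.inner_apply, mul_comm]
      _ = ∑ i, ∫ ω, X t ω i * g t ω i ∂P :=
          integral_finset_sum _ fun i _ => hprodInt t i
      _ = ∑ i, ∫ ω, X t ω i * X t ω i ∂P := by
          exact Finset.sum_congr rfl fun i _ => hmain i
      _ = ∫ ω, ∑ i, X t ω i * X t ω i ∂P :=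
          (integral_finset_sum _ fun i _ => hsqInt t i).symm
      _ = A t := by
          refine integral_congr_ae (Filter.Eventually.of_forall fun ω => ?_)
          have h := real_inner_self_eq_norm_sq (X t ω)
          simp only [PiLp.inner_apply, RCLike.inner_apply, starRingEnd_apply, star_trivial] at h
          exact h
  -- key bound: E‖g‖² ≤ E‖X‖² + σ²/b
  have hXX : ∀ t, ∫ ω, ⟪X t ω, X t ω⟫ ∂P = A t := by
    intro t
    refine integral_congr_ae (Filter.Eventually.of_forall fun ω => ?_)
    exact real_inner_self_eq_norm_sq (X t ω)
  have hI2 : ∀ t, ∫ ω, ‖g t ω‖ ^ 2 ∂P ≤ A t + σ ^ 2 / b t := by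
    intro t
    have he2 : MemLp (fun ω => g t ω - X t ω) 2 P := (hgL2 t).sub (hXL2 t)
    have heInt : Integrable (fun ω => ‖g t ω - X t ω‖ ^ 2) P := he2.norm.integrable_sq
    have hXe : Integrable (fun ω => ⟪X t ω, g t ω - X t ω⟫) P :=
      sgd_integrable_inner (hXL2 t) he2
    have h1 : ∫ ω, ‖g t ω - X t ω‖ ^ 2 ∂P ≤ σ ^ 2 / b t := by
      calc ∫ ω, ‖g t ω - X t ω‖ ^ 2 ∂P
          = ∫ ω, (P[fun ω' => ‖g t ω' - gradient f (θ t ω')‖ ^ 2|ℱ t]) ω ∂P :=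
            (integral_condExp (hle t)).symm
        _ ≤ ∫ ω, σ ^ 2 / b t ∂P :=
            integral_mono_ae integrable_condExp (integrable_const _) (hvar t)
        _ = σ ^ 2 / b t := by simp
    have h3 : ∫ ω, ⟪X t ω, g t ω - X t ω⟫ ∂P = 0 := by
      have heq : (fun ω => ⟪X t ω, g t ω - X t ω⟫)
          = fun ω => ⟪X t ω, g t ω⟫ - ⟪X t ω, X t ω⟫ :=
        funext fun ω => inner_sub_right _ _ _
      rw [heq, integral_sub (hXgInt t) (sgd_integrable_inner (hXL2 t) (hXL2 t)), hI1 t, hXX t,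
        sub_self]
    have hexp : ∀ ω, ‖g t ω‖ ^ 2
        = ‖X t ω‖ ^ 2 + 2 * ⟪X t ω, g t ω - X t ω⟫ + ‖g t ω - X t ω‖ ^ 2 := by
      intro ω
      have h0 : X t ω + (g t ω - X t ω) = g t ω := by abel
      have := norm_add_sq_real (X t ω) (g t ω - X t ω)
      rw [h0] at this
      exact this
    have e1 : ∫ ω, (‖X t ω‖ ^ 2 + 2 * ⟪X t ω, g t ω - X t ω⟫ + ‖g t ω - X t ω‖ ^ 2) ∂P
        = (∫ ω, (‖X t ω‖ ^ 2 + 2 * ⟪X t ω, g t ω - X t ω⟫) ∂P)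
          + ∫ ω, ‖g t ω - X t ω‖ ^ 2 ∂P :=
      integral_add ((hXnormsqInt t).add (hXe.const_mul 2)) heInt
    have e2 : ∫ ω, (‖X t ω‖ ^ 2 + 2 * ⟪X t ω, g t ω - X t ω⟫) ∂P
        = (∫ ω, ‖X t ω‖ ^ 2 ∂P) + ∫ ω, 2 * ⟪X t ω, g t ω - X t ω⟫ ∂P :=
      integral_add (hXnormsqInt t) (hXe.const_mul 2)
    have e3 : ∫ ω, 2 * ⟪X t ω, g t ω - X t ω⟫ ∂P = 0 := by
      rw [integral_const_mul, h3, mul_zero]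
    have e4 : (∫ ω, ‖X t ω‖ ^ 2 ∂P) = A t := rfl
    have etot : ∫ ω, ‖g t ω‖ ^ 2 ∂P = A t + ∫ ω, ‖g t ω - X t ω‖ ^ 2 ∂P := by
      rw [integral_congr_ae (Filter.Eventually.of_forall hexp), e1, e2, e3, e4, add_zero]
    rw [etot]
    linarith
  -- one-step inequality
  have hstep : ∀ t, (η t - L * η t ^ 2 / 2) * A t
      ≤ Ff t - Ff (t + 1) + L * η t ^ 2 / 2 * (σ ^ 2 / b t) := by
    intro t
    have haestep : ∀ᵐ ω ∂P, f (θ (t + 1) ω)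
        ≤ f (θ t ω) - η t * ⟪X t ω, g t ω⟫ + L / 2 * (η t ^ 2 * ‖g t ω‖ ^ 2) := by
      filter_upwards [hupdate t] with ω h
      have hd := sgd_descent_lemma f hdiff L hsmooth (θ t ω) (-(η t • g t ω))
      rw [← sub_eq_add_neg] at hd
      rw [h]
      refine hd.trans (le_of_eq ?_)
      rw [inner_neg_right, real_inner_smul_right, norm_neg, norm_smul, mul_pow,
        Real.norm_eq_abs, sq_abs]
      ring
    have h4 := integral_mono_ae (hfInt (t + 1))
      (((hfInt t).sub ((hXgInt t).const_mul (η t))).add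
        (((hgnormsqInt t).const_mul (η t ^ 2)).const_mul (L / 2))) haestep
    have e1 : ∫ ω, (f (θ t ω) - η t * ⟪X t ω, g t ω⟫ + L / 2 * (η t ^ 2 * ‖g t ω‖ ^ 2)) ∂P
        = (∫ ω, (f (θ t ω) - η t * ⟪X t ω, g t ω⟫) ∂P)
          + ∫ ω, L / 2 * (η t ^ 2 * ‖g t ω‖ ^ 2) ∂P :=
      integral_add ((hfInt t).sub ((hXgInt t).const_mul (η t)))
        (((hgnormsqInt t).const_mul (η t ^ 2)).const_mul (L / 2))
    have e2 : ∫ ω, (f (θ t ω) - η t * ⟪X t ω, g t ω⟫) ∂P = Ff t - η t * A t := by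
      rw [integral_sub (hfInt t) ((hXgInt t).const_mul (η t)), integral_const_mul, hI1 t]
    have e3 : ∫ ω, L / 2 * (η t ^ 2 * ‖g t ω‖ ^ 2) ∂P
        = L / 2 * (η t ^ 2 * ∫ ω, ‖g t ω‖ ^ 2 ∂P) := by
      rw [integral_const_mul, integral_const_mul]
    have h4' : Ff (t + 1) ≤ Ff t - η t * A t + L / 2 * (η t ^ 2 * ∫ ω, ‖g t ω‖ ^ 2 ∂P) := by
      calc Ff (t + 1)
          ≤ ∫ ω, (f (θ t ω) - η t * ⟪X t ω, g t ω⟫ + L / 2 * (η t ^ 2 * ‖g t ω‖ ^ 2)) ∂P := h4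
        _ = Ff t - η t * A t + L / 2 * (η t ^ 2 * ∫ ω, ‖g t ω‖ ^ 2 ∂P) := by rw [e1, e2, e3]
    have h5 := hI2 t
    have hLη : 0 ≤ L / 2 * η t ^ 2 := by positivity
    have h6 := mul_le_mul_of_nonneg_left h5 hLη
    have h7 : L / 2 * (η t ^ 2 * ∫ ω, ‖g t ω‖ ^ 2 ∂P)
        = L / 2 * η t ^ 2 * ∫ ω, ‖g t ω‖ ^ 2 ∂P := by ring
    have h8 : L / 2 * η t ^ 2 * (A t + σ ^ 2 / b t)
        = L * η t ^ 2 / 2 * A t + L * η t ^ 2 / 2 * (σ ^ 2 / b t) := by ring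
    have h9 : (η t - L * η t ^ 2 / 2) * A t = η t * A t - L * η t ^ 2 / 2 * A t := by ring
    linarith [h4', h6, h7, h8, h9]
  -- summation
  set S := ∑ t ∈ Finset.range T, η t with hSdef
  have hS0 : 0 < S := lt_of_le_of_ne (Finset.sum_nonneg fun t _ => hηt0 t) (Ne.symm hηsum)
  have hstep2 : ∀ t, (2 - L * ηmax) / 2 * (η t * A t)
      ≤ Ff t - Ff (t + 1) + L * σ ^ 2 / 2 * (η t ^ 2 / b t) := by
    intro t
    have h1 := hstep t
    have h2 : (2 - L * ηmax) / 2 * (η t * A t) ≤ (η t - L * η t ^ 2 / 2) * A t := by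
      have hkey : (2 - L * ηmax) / 2 * η t ≤ η t - L * η t ^ 2 / 2 := by
        have hm := mul_le_mul_of_nonneg_left
          (mul_le_mul_of_nonneg_left (hηtmax t) (hηt0 t)) hL.le
        nlinarith [hm]
      calc (2 - L * ηmax) / 2 * (η t * A t)
          = ((2 - L * ηmax) / 2 * η t) * A t := by ring
        _ ≤ (η t - L * η t ^ 2 / 2) * A t := mul_le_mul_of_nonneg_right hkey (hA0 t)
    have h3 : L * η t ^ 2 / 2 * (σ ^ 2 / b t) = L * σ ^ 2 / 2 * (η t ^ 2 / b t) := by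
      ring
    linarith [h1, h2, h3]
  have hsum : (2 - L * ηmax) / 2 * ∑ t ∈ Finset.range T, η t * A t
      ≤ f θ₀ - fstar + L * σ ^ 2 / 2 * ∑ t ∈ Finset.range T, η t ^ 2 / b t := by
    have h1 : ∑ t ∈ Finset.range T, ((2 - L * ηmax) / 2 * (η t * A t))
        ≤ ∑ t ∈ Finset.range T, (Ff t - Ff (t + 1) + L * σ ^ 2 / 2 * (η t ^ 2 / b t)) :=
      Finset.sum_le_sum fun t _ => hstep2 t
    rw [← Finset.mul_sum] at h1
    rw [Finset.sum_add_distrib, Finset.sum_range_sub' Ff T, ← Finset.mul_sum] at h1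
    have hF0 : Ff 0 = f θ₀ := by
      show (∫ ω, f (θ 0 ω) ∂P) = f θ₀
      rw [hθ₀]
      simp
    have hFT : fstar ≤ Ff T := by
      have : (∫ _ω, fstar ∂P) ≤ ∫ ω, f (θ T ω) ∂P :=
        integral_mono (integrable_const _) (hfInt T) fun ω => hbound _
      simpa using this
    have := h1
    rw [hF0] at this
    linarith
  set M := (Finset.range T).inf' (Finset.nonempty_range_iff.mpr (by omega))
      (fun t => ∫ ω, ‖gradient f (θ t ω)‖ ^ 2 ∂P) with hMdef
  have hMA : ∀ t ∈ Finset.range T, M ≤ A t := fun t ht => Finset.inf'_le _ ht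
  have hMS : M * S ≤ ∑ t ∈ Finset.range T, η t * A t := by
    calc M * S = ∑ t ∈ Finset.range T, η t * M := by
          rw [mul_comm, Finset.sum_mul]
      _ ≤ ∑ t ∈ Finset.range T, η t * A t :=
          Finset.sum_le_sum fun t ht => mul_le_mul_of_nonneg_left (hMA t ht) (hηt0 t)
  have hfinal : M * ((2 - L * ηmax) / 2 * S)
      ≤ f θ₀ - fstar + L * σ ^ 2 / 2 * ∑ t ∈ Finset.range T, η t ^ 2 / b t := by
    have h1 : (2 - L * ηmax) / 2 * (M * S) ≤ (2 - L * ηmax) / 2 * ∑ t ∈ Finset.range T, η t * A t :=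
      mul_le_mul_of_nonneg_left hMS (by linarith)
    have h2 : M * ((2 - L * ηmax) / 2 * S) = (2 - L * ηmax) / 2 * (M * S) := by ring
    linarith [hsum, h1, h2]
  have hden : 0 < (2 - L * ηmax) / 2 * S := mul_pos (by linarith) hS0
  have hM : M ≤ (f θ₀ - fstar + L * σ ^ 2 / 2 * ∑ t ∈ Finset.range T, η t ^ 2 / b t)
      / ((2 - L * ηmax) / 2 * S) := (le_div_iff₀ hden).mpr hfinal
  refine hM.trans (le_of_eq ?_)
  field_simp
end

section
/- Let C₁ > 0, C₂ > 0, ε > 0, and define N(b) := C₁ b²/(ε² b − C₂) for b ∈ (C₂/ε², ∞). Then N is strictly decreasing on (C₂/ε², 2C₂/ε²] and strictly increasing on [2C₂/ε², ∞). -/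
/-- The SFO complexity `N(b) = C₁ b² / (ε² b − C₂)` is strictly decreasing on
`(C₂/ε², 2C₂/ε²]` and strictly increasing on `[2C₂/ε², ∞)`. -/
theorem sfo_complexity_monotonicity
    (C₁ C₂ ε : ℝ) (hC₁ : 0 < C₁) (hC₂ : 0 < C₂) (hε : 0 < ε) :
    StrictAntiOn (fun b : ℝ => C₁ * b ^ 2 / (ε ^ 2 * b - C₂))
        (Set.Ioc (C₂ / ε ^ 2) (2 * C₂ / ε ^ 2)) ∧
    StrictMonoOn (fun b : ℝ => C₁ * b ^ 2 / (ε ^ 2 * b - C₂))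
        (Set.Ici (2 * C₂ / ε ^ 2)) := by
  have hε2 : 0 < ε ^ 2 := by positivity
  constructor
  · rintro x ⟨hx1, hx2⟩ y ⟨hy1, hy2⟩ hxy
    have hdx : 0 < ε ^ 2 * x - C₂ := by
      have := (div_lt_iff₀ hε2).mp hx1
      linarith [this]
    have hdy : 0 < ε ^ 2 * y - C₂ := by
      have := (div_lt_iff₀ hε2).mp hy1
      linarith [this]
    have hyb : ε ^ 2 * y ≤ 2 * C₂ := by
      have := (le_div_iff₀ hε2).mp hy2
      linarith [this]
    simp only
    rw [div_lt_div_iff₀ hdy hdx]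
    have hxpos : 0 < x := lt_trans (by positivity) hx1
    have hkey : 0 < C₂ * (x + y) - ε ^ 2 * x * y := by nlinarith
    nlinarith [mul_pos hC₁ (mul_pos (sub_pos.mpr hxy) hkey)]
  · rintro x hx y hy hxy
    have hx' : 2 * C₂ / ε ^ 2 ≤ x := hx
    have hy' : 2 * C₂ / ε ^ 2 ≤ y := hy
    have hxb : 2 * C₂ ≤ ε ^ 2 * x := by
      have := (div_le_iff₀ hε2).mp hx'
      linarith [this]
    have hdx : 0 < ε ^ 2 * x - C₂ := by linarith
    have hdy : 0 < ε ^ 2 * y - C₂ := by nlinarith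
    simp only
    rw [div_lt_div_iff₀ hdx hdy]
    have hypos : 0 < y := by nlinarith
    have hkey : 0 < ε ^ 2 * x * y - C₂ * (x + y) := by nlinarith
    nlinarith [mul_pos hC₁ (mul_pos (sub_pos.mpr hxy) hkey)]
end
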